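/- In ℓ²: let α > 1 and define x = (x_k)_{k≥2} with x_k = 1/(k^{2α + 1/2} (ln k)^{1/2}). Then Σ_{k≥2} k^{4α} x_k² = ∞ (so x ∉ D(B^α) for B the diagonal operator with eigenvalues k²), but n^{2α-1} · (Σ_{k>n} k² x_k²)^{1/2} → 0 as n → ∞. -/

import Mathlib

open Filter

private lemma xsq_eq (α : ℝ) {k : ℕ} (hk : 2 ≤ k) :
    ((k : ℝ) ^ (-(2 * α + 1 / 2)) * (Real.log k) ^ (-(1 / 2) : ℝ)) ^ 2
      = (k : ℝ) ^ (-(4 * α + 1)) * (Real.log k)⁻¹ := by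
  have hk0 : (0:ℝ) < k := by positivity
  have hk1 : (1:ℝ) < k := by exact_mod_cast hk.trans_lt' one_lt_two
  have hl : 0 < Real.log k := Real.log_pos hk1
  rw [mul_pow, ← Real.rpow_natCast ((k:ℝ) ^ (-(2 * α + 1 / 2))) 2,
    ← Real.rpow_natCast ((Real.log k) ^ (-(1/2):ℝ)) 2,
    ← Real.rpow_mul hk0.le, ← Real.rpow_mul hl.le]
  push_cast
  rw [show (-(2 * α + 1 / 2) * (2:ℝ)) = -(4 * α + 1) by ring,
    show (-(1/2) * (2:ℝ) : ℝ) = (-1 : ℝ) by ring, Real.rpow_neg_one]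

private lemma nlog_pos {n : ℕ} (hn : 2 ≤ n) : (0:ℝ) < (n : ℝ) * Real.log n := by
  have h1 : (1:ℝ) < n := by exact_mod_cast lt_of_lt_of_le one_lt_two hn
  exact mul_pos (by linarith) (Real.log_pos h1)

private lemma not_summable_aux : ¬ Summable (fun k : ℕ =>
    if k ≤ 1 then (1:ℝ) else ((k : ℝ) * Real.log k)⁻¹) := by
  set f : ℕ → ℝ := fun k => if k ≤ 1 then (1:ℝ) else ((k : ℝ) * Real.log k)⁻¹ with hf
  have hnonneg : ∀ n, 0 ≤ f n := by
    intro n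
    by_cases h : n ≤ 1
    · simp [hf, h]
    · push_neg at h
      simp only [hf, if_neg (not_le.mpr h)]
      exact inv_nonneg.mpr (nlog_pos h).le
  have hone : ∀ n : ℕ, 2 ≤ n → (1:ℝ) ≤ (n : ℝ) * Real.log n := by
    intro n hn
    have h2 : (2:ℝ) ≤ n := by exact_mod_cast hn
    have hl2 : (0.6931471803 : ℝ) < Real.log 2 := Real.log_two_gt_d9
    have hln : Real.log 2 ≤ Real.log n := Real.log_le_log (by norm_num) h2
    nlinarith [Real.log_nonneg (by linarith : (1:ℝ) ≤ n)]
  have hmono : ∀ ⦃m n : ℕ⦄, 0 < m → m ≤ n → f n ≤ f m := by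
    intro m n hm hmn
    by_cases hm1 : m ≤ 1
    · have hfm : f m = 1 := by simp [hf, hm1]
      rw [hfm]
      by_cases hn1 : n ≤ 1
      · simp [hf, hn1]
      · push_neg at hn1
        simp only [hf, if_neg (not_le.mpr hn1)]
        rw [inv_le_one_iff₀]
        right; exact hone n hn1
    · push_neg at hm1
      have hn1 : ¬ n ≤ 1 := by omega
      simp only [hf, if_neg (not_le.mpr hm1), if_neg hn1]
      have hm2 : 2 ≤ m := hm1
      have hmr : (2:ℝ) ≤ m := by exact_mod_cast hm2
      apply inv_anti₀ (nlog_pos hm2)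
      have hc : (m:ℝ) ≤ n := by exact_mod_cast hmn
      have hlm : 0 ≤ Real.log m := Real.log_nonneg (by linarith)
      have hlog : Real.log m ≤ Real.log n := Real.log_le_log (by linarith) hc
      exact mul_le_mul hc hlog hlm (by linarith)
  intro hs
  rw [← summable_condensed_iff_of_nonneg hnonneg hmono] at hs
  have hs1 := (summable_nat_add_iff 1).mpr hs
  have heq : ∀ n : ℕ, (2:ℝ) ^ (n+1) * f (2 ^ (n+1)) = ((n:ℝ)+1)⁻¹ * (Real.log 2)⁻¹ := by
    intro n
    have h2 : ¬ (2 ^ (n+1) ≤ 1) := by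
      have : 2 ≤ 2 ^ (n+1) := le_self_pow₀ one_le_two (by omega)
      omega
    have hcast : ((2 ^ (n+1) : ℕ) : ℝ) = (2:ℝ) ^ (n+1) := by push_cast; ring
    have hlog : Real.log ((2 ^ (n+1) : ℕ) : ℝ) = ((n:ℝ)+1) * Real.log 2 := by
      rw [hcast, Real.log_pow]; push_cast; ring
    simp only [hf, if_neg h2, hlog, hcast]
    have hpow : (0:ℝ) < (2:ℝ) ^ (n+1) := by positivity
    have hl2 : (0:ℝ) < Real.log 2 := Real.log_pos one_lt_two
    have hn1 : (0:ℝ) < (n:ℝ)+1 := by positivity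
    field_simp
    rw [Real.log_pow, Nat.cast_add, Nat.cast_one]
  have hs2 : Summable (fun n : ℕ => ((n:ℝ)+1)⁻¹ * (Real.log 2)⁻¹) :=
    hs1.congr fun n => heq n
  have hs3 : Summable (fun n : ℕ => ((n:ℝ)+1)⁻¹) := by
    have h := hs2.mul_right (Real.log 2)
    apply h.congr
    intro n
    have hl2 : Real.log 2 ≠ 0 := (Real.log_pos one_lt_two).ne'
    field_simp
  have hs4 : Summable (fun n : ℕ => ((n:ℕ):ℝ)⁻¹) := by
    rw [← summable_nat_add_iff 1]
    apply hs3.congr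
    intro n
    push_cast
    ring_nf
  exact Real.not_summable_natCast_inv hs4
private lemma keypt (α : ℝ) (hα : 1 < α) {n k : ℕ} (hn : 2 ≤ n) (hk : n < k) :
    (k:ℝ)^(2:ℕ) * ((k:ℝ)^(-(4*α+1)) * (Real.log k)⁻¹)
      ≤ ((n:ℝ)^(3-4*α)/Real.log n) * ((k:ℝ)^(2:ℕ))⁻¹ := by
  have hk2 : 2 ≤ k := by omega
  have hn1 : (1:ℝ) < n := by exact_mod_cast lt_of_lt_of_le one_lt_two hn
  have hk1 : (1:ℝ) < k := by exact_mod_cast lt_of_lt_of_le one_lt_two hk2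
  have hn0 : (0:ℝ) < n := by linarith
  have hk0 : (0:ℝ) < k := by linarith
  have hnk : (n:ℝ) ≤ k := by exact_mod_cast hk.le
  have hln : 0 < Real.log n := Real.log_pos hn1
  have hlk : 0 < Real.log k := Real.log_pos hk1
  have hlog : Real.log n ≤ Real.log k := Real.log_le_log hn0 hnk
  have hmain : (k:ℝ)^(3-4*α) * (Real.log k)⁻¹ ≤ (n:ℝ)^(3-4*α) * (Real.log n)⁻¹ :=
    mul_le_mul (Real.rpow_le_rpow_of_nonpos hn0 hnk (by linarith))
      (inv_anti₀ hln hlog) (inv_nonneg.mpr hlk.le) (Real.rpow_nonneg hn0.le _)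
  calc (k:ℝ)^(2:ℕ) * ((k:ℝ)^(-(4*α+1)) * (Real.log k)⁻¹)
      = ((k:ℝ)^((2:ℕ):ℝ) * (k:ℝ)^(-(4*α+1))) * (Real.log (k:ℝ))⁻¹ := by
        rw [Real.rpow_natCast]; ring
    _ = ((k:ℝ)^(3-4*α) * (k:ℝ)^(-((2:ℕ):ℝ))) * (Real.log (k:ℝ))⁻¹ := by
        rw [← Real.rpow_add hk0, ← Real.rpow_add hk0]
        congr 2
        push_cast; ring
    _ = ((k:ℝ)^(3-4*α) * (Real.log (k:ℝ))⁻¹) * ((k:ℝ)^(2:ℕ))⁻¹ := by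
        rw [Real.rpow_neg hk0.le, Real.rpow_natCast]; ring
    _ ≤ ((n:ℝ)^(3-4*α) * (Real.log (n:ℝ))⁻¹) * ((k:ℝ)^(2:ℕ))⁻¹ :=
        mul_le_mul_of_nonneg_right hmain (by positivity)
    _ = ((n:ℝ)^(3-4*α)/Real.log n) * ((k:ℝ)^(2:ℕ))⁻¹ := by rw [div_eq_mul_inv]

theorem ritz_counterexample (α : ℝ) (hα : 1 < α) :
    (¬ Summable (fun k : ℕ =>
        (k : ℝ) ^ (4 * α) *
          (if 2 ≤ k then (k : ℝ) ^ (-(2 * α + 1 / 2)) * (Real.log k) ^ (-(1 / 2) : ℝ)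
            else 0) ^ 2)) ∧
      Tendsto (fun n : ℕ =>
          (n : ℝ) ^ (2 * α - 1) *
            Real.sqrt (∑' k : ℕ, if k ≤ n then 0 else
              (k : ℝ) ^ 2 *
                (if 2 ≤ k then (k : ℝ) ^ (-(2 * α + 1 / 2)) * (Real.log k) ^ (-(1 / 2) : ℝ)
                  else 0) ^ 2))
        atTop (nhds 0) := by
  constructor
  · -- Part 1
    intro hs
    apply not_summable_aux
    rw [← summable_nat_add_iff 2]
    apply ((summable_nat_add_iff 2).mpr hs).congr
    intro n
    have hk : 2 ≤ n + 2 := by omega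
    have hk0 : (0:ℝ) < ((n+2 : ℕ) : ℝ) := by positivity
    rw [if_pos hk, xsq_eq α hk, if_neg (by omega : ¬ n + 2 ≤ 1), ← mul_assoc,
      ← Real.rpow_add hk0, show (4*α + -(4*α+1)) = (-1:ℝ) by ring, Real.rpow_neg_one,
      mul_inv]
  · -- Part 2
    set F : ℕ → ℕ → ℝ := fun n k => if k ≤ n then 0 else
      (k : ℝ) ^ 2 *
        (if 2 ≤ k then (k : ℝ) ^ (-(2 * α + 1 / 2)) * (Real.log k) ^ (-(1 / 2) : ℝ)
          else 0) ^ 2 with hF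
    set G : ℕ → ℕ → ℝ := fun n k => if k ≤ n then 0 else ((k:ℝ)^(2:ℕ))⁻¹ with hG
    have hFnonneg : ∀ n k, 0 ≤ F n k := by
      intro n k
      by_cases h : k ≤ n
      · simp [hF, h]
      · simp only [hF, if_neg h]; positivity
    have hGnonneg : ∀ n k, 0 ≤ G n k := by
      intro n k
      by_cases h : k ≤ n
      · simp [hG, h]
      · simp only [hG, if_neg h]; positivity
    have hsq : Summable (fun k : ℕ => ((k:ℝ)^(2:ℕ))⁻¹) := by
      have := Real.summable_one_div_nat_pow.mpr (one_lt_two : 1 < 2)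
      simpa [one_div] using this
    have hGsum : ∀ n, Summable (G n) := by
      intro n
      apply Summable.of_nonneg_of_le (hGnonneg n) _ hsq
      intro k
      by_cases h : k ≤ n
      · simp [hG, h]
      · simp [hG, h]
    have key : ∀ n : ℕ, 2 ≤ n → ∀ k : ℕ,
        F n k ≤ ((n:ℝ)^(3-4*α)/Real.log n) * G n k := by
      intro n hn k
      by_cases h : k ≤ n
      · simp [hF, hG, h]
      · push_neg at h
        have hk2 : 2 ≤ k := by omega
        simp only [hF, hG, if_neg (not_le.mpr h), if_pos hk2]
        rw [xsq_eq α hk2]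
        exact keypt α hα hn h
    have hFsum : ∀ n : ℕ, 2 ≤ n → Summable (F n) := by
      intro n hn
      have hC : 0 ≤ (n:ℝ)^(3-4*α)/Real.log n := by
        have hn1 : (1:ℝ) < n := by exact_mod_cast lt_of_lt_of_le one_lt_two hn
        have := Real.log_pos hn1
        positivity
      exact Summable.of_nonneg_of_le (hFnonneg n) (key n hn) ((hGsum n).mul_left _)
    have hGle : ∀ n : ℕ, (∑' k, G n k) ≤ 2/((n:ℝ)+1) := by
      intro n
      apply Summable.tsum_le_of_sum_le (hGsum n)
      intro s
      classical
      calc ∑ k ∈ s, G n k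
          = ∑ k ∈ s.filter (fun k => n < k), ((k:ℝ)^(2:ℕ))⁻¹ := by
            rw [Finset.sum_filter]
            apply Finset.sum_congr rfl
            intro k _
            by_cases h : k ≤ n
            · simp [hG, h, Nat.not_lt.mpr h]
            · simp [hG, h, Nat.lt_of_not_le h]
        _ ≤ ∑ k ∈ Finset.Ioo n (s.sup id + 1), ((k:ℝ)^(2:ℕ))⁻¹ := by
            apply Finset.sum_le_sum_of_subset_of_nonneg
            · intro k hkmem
              rw [Finset.mem_filter] at hkmem
              rw [Finset.mem_Ioo]
              exact ⟨hkmem.2, by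
                have := Finset.le_sup (f := id) hkmem.1
                simpa using Nat.lt_succ_of_le this⟩
            · intro k _ _; positivity
        _ ≤ 2/((n:ℝ)+1) := by
            have := sum_Ioo_inv_sq_le (α := ℝ) n (s.sup id + 1)
            simpa using this
    have hbound : ∀ n : ℕ, 2 ≤ n →
        (n:ℝ)^(2*α-1) * Real.sqrt (∑' k, F n k) ≤ Real.sqrt (2 / Real.log n) := by
      intro n hn
      have hn1 : (1:ℝ) < n := by exact_mod_cast lt_of_lt_of_le one_lt_two hn
      have hn0 : (0:ℝ) < n := by linarith
      have hln : 0 < Real.log n := Real.log_pos hn1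
      have hC : 0 ≤ (n:ℝ)^(3-4*α)/Real.log n := by positivity
      have h1 : (∑' k, F n k) ≤ ((n:ℝ)^(3-4*α)/Real.log n) * (2/((n:ℝ)+1)) := by
        calc (∑' k, F n k)
            ≤ ∑' k, ((n:ℝ)^(3-4*α)/Real.log n) * G n k :=
              Summable.tsum_le_tsum (key n hn) (hFsum n hn) ((hGsum n).mul_left _)
          _ = ((n:ℝ)^(3-4*α)/Real.log n) * ∑' k, G n k := tsum_mul_left
          _ ≤ ((n:ℝ)^(3-4*α)/Real.log n) * (2/((n:ℝ)+1)) :=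
              mul_le_mul_of_nonneg_left (hGle n) hC
      have h2 : (n:ℝ)^(2*α-1) * Real.sqrt (∑' k, F n k)
          = Real.sqrt ((n:ℝ)^(4*α-2) * ∑' k, F n k) := by
        rw [Real.sqrt_mul (Real.rpow_nonneg hn0.le _), Real.sqrt_eq_rpow ((n:ℝ)^(4*α-2)),
          ← Real.rpow_mul hn0.le, show (4*α-2) * (1/2) = 2*α-1 by ring]
      rw [h2]
      apply Real.sqrt_le_sqrt
      calc (n:ℝ)^(4*α-2) * ∑' k, F n k
          ≤ (n:ℝ)^(4*α-2) * (((n:ℝ)^(3-4*α)/Real.log n) * (2/((n:ℝ)+1))) :=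
            mul_le_mul_of_nonneg_left h1 (Real.rpow_nonneg hn0.le _)
        _ = ((n:ℝ)^(4*α-2) * (n:ℝ)^(3-4*α)) * (2/(((n:ℝ)+1) * Real.log n)) := by
            field_simp
        _ = (n:ℝ) * (2/(((n:ℝ)+1) * Real.log n)) := by
            rw [← Real.rpow_add hn0, show (4*α-2+(3-4*α)) = (1:ℝ) by ring, Real.rpow_one]
        _ = 2/Real.log n * ((n:ℝ)/((n:ℝ)+1)) := by field_simp
        _ ≤ 2/Real.log n * 1 := by
            apply mul_le_mul_of_nonneg_left _ (by positivity)
            rw [div_le_one (by positivity)]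
            linarith
        _ = 2/Real.log n := mul_one _
    have hupper : Tendsto (fun n : ℕ => Real.sqrt (2 / Real.log n)) atTop (nhds 0) := by
      have hlog : Tendsto (fun n : ℕ => Real.log n) atTop atTop :=
        Real.tendsto_log_atTop.comp tendsto_natCast_atTop_atTop
      have h0 : Tendsto (fun n : ℕ => 2 / Real.log n) atTop (nhds 0) :=
        Tendsto.div_atTop tendsto_const_nhds hlog
      have := (Real.continuous_sqrt.tendsto 0).comp h0
      simpa [Function.comp_def] using this
    apply squeeze_zero' _ _ hupper
    · filter_upwards with n
      positivity
    · filter_upwards [eventually_ge_atTop 2] with n hn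
      exact hbound n hn
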